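/- For all m, m' ≥ 2 and n = m·m', the minimum Hamming distance of C equals 2^{n−2}; that is, every nonzero c ∈ C has wt(c) ≥ 2^{n−2}, and there exists c ∈ C with wt(c) = 2^{n−2}. -/

import Mathlib

/-- Monomial evaluation: `mon_S(α) = ∏_{i ∈ S} α i`. -/
def mon {n : ℕ} (S : Finset (Fin n)) : (Fin n → ZMod 2) → ZMod 2 :=
  fun x => ∏ i ∈ S, x i

/-- The Reed–Muller code `RM(r, n)` : span of the monomials of degree at most `r`. -/
def RMcode (r n : ℕ) : Submodule (ZMod 2) ((Fin n → ZMod 2) → ZMod 2) :=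
  Submodule.span (ZMod 2) {c | ∃ S : Finset (Fin n), S.card ≤ r ∧ c = mon S}

/-- The second-order recursive subproduct code `C = RM(1,m')^{⊗[2,m]}` of length `2^{m·m'}`:
span of the monomials `mon_S` with `|S| ≤ 2` and `|S ∩ Bᵢ| ≤ 1` for every block
`Bᵢ = {(i−1)·m', …, i·m'−1}` (an index `i : Fin (m·m')` lies in block `(i : ℕ) / m'`). -/
def Ccode (m m' : ℕ) : Submodule (ZMod 2) ((Fin (m * m') → ZMod 2) → ZMod 2) :=
  Submodule.span (ZMod 2) {c | ∃ S : Finset (Fin (m * m')),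
    S.card ≤ 2 ∧ (∀ b : ℕ, (S.filter fun i : Fin (m * m') => (i : ℕ) / m' = b).card ≤ 1) ∧ c = mon S}

/-- Hamming weight: the number of evaluation points where `c` takes the value `1`. -/
def wt {n : ℕ} (c : (Fin n → ZMod 2) → ZMod 2) : ℕ :=
  (Finset.univ.filter fun x => c x = 1).card

-- ZMod 2 facts
lemma zmod2_cases (a : ZMod 2) : a = 0 ∨ a = 1 := by revert a; decide
lemma zmod2_mul_eq_one (a b : ZMod 2) : a * b = 1 ↔ a = 1 ∧ b = 1 := by revert a b; decide
lemma zmod2_add_eq_one (a b : ZMod 2) : a + b = 1 → a = 1 ∨ b = 1 := by revert a b; decide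
lemma zmod2_ne_zero (a : ZMod 2) : a ≠ 0 ↔ a = 1 := by revert a; decide
lemma zmod2_add_self (a : ZMod 2) : a + a = 0 := by revert a; decide
lemma zmod2_add_eq_zero (a b : ZMod 2) : a + b = 0 → a = b := by revert a b; decide

-- restriction linear maps
def resMap (n : ℕ) (a : ZMod 2) :
    ((Fin (n+1) → ZMod 2) → ZMod 2) →ₗ[ZMod 2] ((Fin n → ZMod 2) → ZMod 2) where
  toFun f := fun y => f (Fin.cons a y)
  map_add' _ _ := rfl
  map_smul' _ _ := rfl

lemma erase_eq_image (n : ℕ) (S : Finset (Fin (n+1))) :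
    (S.preimage Fin.succ (Fin.succ_injective n).injOn).image Fin.succ = S.erase 0 := by
  ext j
  simp only [Finset.mem_image, Finset.mem_preimage, Finset.mem_erase]
  constructor
  · rintro ⟨k, hk, rfl⟩; exact ⟨Fin.succ_ne_zero k, hk⟩
  · rintro ⟨hj, hjS⟩
    obtain ⟨k, rfl⟩ := Fin.eq_succ_of_ne_zero hj
    exact ⟨k, hjS, rfl⟩

lemma mon_cons (n : ℕ) (S : Finset (Fin (n+1))) (a : ZMod 2) (y : Fin n → ZMod 2) :
    mon S (Fin.cons a y) =
      (if (0 : Fin (n+1)) ∈ S then a else 1) *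
        mon (S.preimage Fin.succ (Fin.succ_injective n).injOn) y := by
  have hprod : ∏ i ∈ S.erase 0, (Fin.cons a y) i
      = mon (S.preimage Fin.succ (Fin.succ_injective n).injOn) y := by
    rw [← erase_eq_image n S,
      Finset.prod_image (fun x _ y _ h => Fin.succ_injective n h)]
    simp [mon]
  by_cases h0 : (0 : Fin (n+1)) ∈ S
  · rw [if_pos h0, show mon S (Fin.cons a y) = ∏ i ∈ S, (Fin.cons a y) i from rfl,
      ← Finset.prod_erase_mul S _ h0, hprod]
    simp [mul_comm]
  · rw [if_neg h0, one_mul, ← hprod, Finset.erase_eq_of_notMem h0]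
    rfl

lemma res_mem (n r : ℕ) (f : (Fin (n+1) → ZMod 2) → ZMod 2)
    (hf : f ∈ RMcode r (n+1)) : resMap n 0 f ∈ RMcode r n := by
  have hle : RMcode r (n+1) ≤ Submodule.comap (resMap n 0) (RMcode r n) := by
    rw [RMcode, Submodule.span_le]
    rintro c ⟨S, hS, rfl⟩
    simp only [SetLike.mem_coe, Submodule.mem_comap]
    have : resMap n 0 (mon S) =
        (if (0 : Fin (n+1)) ∈ S then (0:ZMod 2) else 1) •
          mon (S.preimage Fin.succ (Fin.succ_injective n).injOn) := by
      funext y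
      simp only [resMap, LinearMap.coe_mk, AddHom.coe_mk, Pi.smul_apply, smul_eq_mul]
      rw [mon_cons]
    rw [this]
    refine Submodule.smul_mem _ _ (Submodule.subset_span ?_)
    refine ⟨_, ?_, rfl⟩
    calc (S.preimage Fin.succ (Fin.succ_injective n).injOn).card
        = ((S.preimage Fin.succ (Fin.succ_injective n).injOn).image Fin.succ).card :=
          (Finset.card_image_of_injective _ (Fin.succ_injective n)).symm
      _ = (S.erase 0).card := by rw [erase_eq_image]
      _ ≤ S.card := Finset.card_erase_le
      _ ≤ r := hS
  exact hle hf

lemma res_sum_mem (n r : ℕ) (f : (Fin (n+1) → ZMod 2) → ZMod 2)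
    (hf : f ∈ RMcode r (n+1)) : resMap n 0 f + resMap n 1 f ∈ RMcode (r-1) n := by
  have hle : RMcode r (n+1) ≤ Submodule.comap (resMap n 0 + resMap n 1) (RMcode (r-1) n) := by
    rw [RMcode, Submodule.span_le]
    rintro c ⟨S, hS, rfl⟩
    simp only [SetLike.mem_coe, Submodule.mem_comap, LinearMap.add_apply]
    set T := S.preimage Fin.succ (Fin.succ_injective n).injOn with hT
    by_cases h0 : (0 : Fin (n+1)) ∈ S
    · have : resMap n 0 (mon S) + resMap n 1 (mon S) = mon T := by
        funext y
        simp only [resMap, LinearMap.coe_mk, AddHom.coe_mk, Pi.add_apply]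
        rw [mon_cons, mon_cons, if_pos h0, if_pos h0, zero_mul, one_mul, zero_add]
      rw [this]
      refine Submodule.subset_span ⟨T, ?_, rfl⟩
      have hcard : T.card = (S.erase 0).card := by
        calc T.card = (T.image Fin.succ).card :=
            (Finset.card_image_of_injective _ (Fin.succ_injective n)).symm
          _ = (S.erase 0).card := by rw [hT, erase_eq_image]
      rw [hcard, Finset.card_erase_of_mem h0]
      exact Nat.sub_le_sub_right hS 1
    · have : resMap n 0 (mon S) + resMap n 1 (mon S) = 0 := by
        funext y
        simp only [resMap, LinearMap.coe_mk, AddHom.coe_mk, Pi.add_apply, Pi.zero_apply]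
        rw [mon_cons, mon_cons, if_neg h0, if_neg h0, one_mul]
        exact zmod2_add_self _
      rw [this]; exact Submodule.zero_mem _
  exact hle hf

-- weight decomposition
lemma wt_cons (n : ℕ) (f : (Fin (n+1) → ZMod 2) → ZMod 2) :
    wt f = wt (resMap n 0 f) + wt (resMap n 1 f) := by
  have key : ∀ a : ZMod 2,
      ((Finset.univ.filter fun x : Fin (n+1) → ZMod 2 => f x = 1).filter
        (fun x => x 0 = a)).card = wt (resMap n a f) := by
    intro a
    rw [wt]
    refine Finset.card_nbij' (fun x => Fin.tail x) (fun y => Fin.cons a y) ?_ ?_ ?_ ?_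
    · intro x hx
      simp only [Finset.mem_coe, Finset.mem_filter, Finset.mem_univ, true_and] at hx ⊢
      have hx0 : Fin.cons a (Fin.tail x) = x := by
        rw [← hx.2]; exact Fin.cons_self_tail x
      show f (Fin.cons a (Fin.tail x)) = 1
      rw [hx0]; exact hx.1
    · intro y hy
      simp only [Finset.mem_coe, Finset.mem_filter, Finset.mem_univ, true_and] at hy ⊢
      exact ⟨hy, rfl⟩
    · intro x hx
      simp only [Finset.mem_coe, Finset.mem_filter] at hx
      rw [← hx.2]; exact Fin.cons_self_tail x
    · intro y _
      funext k
      simp [Fin.tail_cons]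
  have hsplit := Finset.card_filter_add_card_filter_not
    (s := (Finset.univ.filter fun x : Fin (n+1) → ZMod 2 => f x = 1))
    (p := fun x => x 0 = 0)
  have hneg : ((Finset.univ.filter fun x : Fin (n+1) → ZMod 2 => f x = 1).filter
      (fun x => ¬ x 0 = 0)).card
      = ((Finset.univ.filter fun x : Fin (n+1) → ZMod 2 => f x = 1).filter
      (fun x => x 0 = 1)).card := by
    congr 1
    apply Finset.filter_congr
    intro x _
    simp [zmod2_ne_zero (x 0)]
  rw [wt, ← hsplit, key 0, hneg, key 1]

lemma wt_add_le {n : ℕ} (f g : (Fin n → ZMod 2) → ZMod 2) :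
    wt (f + g) ≤ wt f + wt g := by
  rw [wt, wt, wt]
  calc (Finset.univ.filter fun x => (f + g) x = 1).card
      ≤ ((Finset.univ.filter fun x => f x = 1) ∪ (Finset.univ.filter fun x => g x = 1)).card := by
        apply Finset.card_le_card
        intro x hx
        simp only [Finset.mem_filter, Finset.mem_univ, true_and, Finset.mem_union,
          Pi.add_apply] at hx ⊢
        exact zmod2_add_eq_one _ _ hx
    _ ≤ _ := Finset.card_union_le _ _

lemma wt_one (n : ℕ) : wt (1 : (Fin n → ZMod 2) → ZMod 2) = 2 ^ n := by
  rw [wt]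
  have : (Finset.univ.filter fun x : Fin n → ZMod 2 => (1 : (Fin n → ZMod 2) → ZMod 2) x = 1)
      = Finset.univ := by
    apply Finset.filter_true_of_mem; intro x _; rfl
  rw [this, Finset.card_univ]
  rw [Fintype.card_eq_nat_card]
  simp [Nat.card_fun]

lemma RM_zero (n : ℕ) (f : (Fin n → ZMod 2) → ZMod 2) (hf : f ∈ RMcode 0 n)
    (hne : f ≠ 0) : f = 1 := by
  have hset : {c : (Fin n → ZMod 2) → ZMod 2 | ∃ S : Finset (Fin n), S.card ≤ 0 ∧ c = mon S}
      = {mon ∅} := by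
    ext c
    simp only [Set.mem_setOf_eq, Set.mem_singleton_iff, Nat.le_zero, Finset.card_eq_zero]
    constructor
    · rintro ⟨S, rfl, rfl⟩; rfl
    · rintro rfl; exact ⟨∅, rfl, rfl⟩
  rw [RMcode, hset, Submodule.mem_span_singleton] at hf
  obtain ⟨t, rfl⟩ := hf
  rcases zmod2_cases t with rfl | rfl
  · exact absurd (zero_smul _ _) hne
  · rw [one_smul]
    funext x; simp [mon]

lemma RM_bound : ∀ n r (f : (Fin n → ZMod 2) → ZMod 2),
    f ∈ RMcode r n → f ≠ 0 → 2 ^ n ≤ 2 ^ r * wt f := by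
  intro n
  induction n with
  | zero =>
    intro r f _ hne
    have : ∃ x, f x ≠ 0 := by
      by_contra h; push_neg at h; exact hne (funext fun x => h x)
    obtain ⟨x, hx⟩ := this
    have : 1 ≤ wt f := by
      rw [wt]
      exact Finset.card_pos.mpr
        ⟨x, Finset.mem_filter.mpr ⟨Finset.mem_univ x, (zmod2_ne_zero (f x)).mp hx⟩⟩
    calc 2 ^ 0 = 1 := rfl
      _ ≤ 2 ^ r * 1 := Nat.le_mul_of_pos_left 1 (Nat.two_pow_pos r)
      _ ≤ 2 ^ r * wt f := Nat.mul_le_mul_left _ this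
  | succ n ih =>
    intro r f hf hne
    rcases r with _ | r'
    · rw [RM_zero _ _ hf hne, wt_one]
      simp
    · have hw := wt_cons n f
      by_cases hs : resMap n 0 f + resMap n 1 f = 0
      · have heq : resMap n 0 f = resMap n 1 f := by
          funext y
          exact zmod2_add_eq_zero _ _ (congrFun hs y)
        have h0ne : resMap n 0 f ≠ 0 := by
          intro h0
          apply hne
          funext x
          show f x = 0
          rcases zmod2_cases (x 0) with hx0 | hx0
          · have h1 : f (Fin.cons (0:ZMod 2) (Fin.tail x)) = 0 := congrFun h0 (Fin.tail x)
            calc f x = f (Fin.cons (x 0) (Fin.tail x)) := by rw [Fin.cons_self_tail]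
              _ = 0 := by rw [hx0]; exact h1
          · have h1 : f (Fin.cons (1:ZMod 2) (Fin.tail x)) = 0 := by
              have := congrFun heq (Fin.tail x)
              have h2 : resMap n 1 f (Fin.tail x) = 0 := by
                rw [← this]; exact congrFun h0 (Fin.tail x)
              exact h2
            calc f x = f (Fin.cons (x 0) (Fin.tail x)) := by rw [Fin.cons_self_tail]
              _ = 0 := by rw [hx0]; exact h1
        have := ih (r'+1) _ (res_mem n (r'+1) f hf) h0ne
        have hwf : wt f = 2 * wt (resMap n 0 f) := by rw [hw, ← heq]; ring
        calc 2 ^ (n+1) = 2 * 2 ^ n := by ring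
          _ ≤ 2 * (2 ^ (r'+1) * wt (resMap n 0 f)) := Nat.mul_le_mul_left _ this
          _ = 2 ^ (r'+1) * wt f := by rw [hwf]; ring
      · have hmem : resMap n 0 f + resMap n 1 f ∈ RMcode r' n := by
          have h := res_sum_mem n (r'+1) f hf
          simpa using h
        have := ih r' _ hmem hs
        have hle : wt (resMap n 0 f + resMap n 1 f) ≤ wt f := by
          rw [hw]; exact wt_add_le _ _
        calc 2 ^ (n+1) = 2 * 2 ^ n := by ring
          _ ≤ 2 * (2 ^ r' * wt (resMap n 0 f + resMap n 1 f)) := Nat.mul_le_mul_left _ this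
          _ ≤ 2 * (2 ^ r' * wt f) := by
              apply Nat.mul_le_mul_left
              exact Nat.mul_le_mul_left _ hle
          _ = 2 ^ (r'+1) * wt f := by ring

-- counting for the minimum-weight codeword
lemma count_pair (n : ℕ) (i j : Fin n) (hij : i ≠ j) :
    wt (mon {i, j}) = 2 ^ (n - 2) := by
  have hcond : ∀ x : Fin n → ZMod 2, mon {i, j} x = 1 ↔ (x i = 1 ∧ x j = 1) := by
    intro x
    rw [mon, Finset.prod_pair hij]
    exact zmod2_mul_eq_one _ _
  rw [wt]
  have hfilter : (Finset.univ.filter fun x : Fin n → ZMod 2 => mon {i,j} x = 1)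
      = Finset.univ.filter fun x => x i = 1 ∧ x j = 1 := by
    apply Finset.filter_congr; intro x _; exact hcond x
  rw [hfilter]
  have hcard : (Finset.univ.filter fun x : Fin n → ZMod 2 => x i = 1 ∧ x j = 1).card
      = Fintype.card {x : Fin n → ZMod 2 // x i = 1 ∧ x j = 1} := by
    rw [Fintype.card_subtype]
  rw [hcard]
  have e : {x : Fin n → ZMod 2 // x i = 1 ∧ x j = 1} ≃ ({k : Fin n // k ≠ i ∧ k ≠ j} → ZMod 2) := by
    refine ⟨fun x k => x.1 k.1, fun g => ⟨fun k => if h : k ≠ i ∧ k ≠ j then g ⟨k, h⟩ else 1, ?_⟩, ?_, ?_⟩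
    · constructor
      · show (if h : i ≠ i ∧ i ≠ j then g ⟨i, h⟩ else 1) = 1
        rw [dif_neg (fun h => h.1 rfl)]
      · show (if h : j ≠ i ∧ j ≠ j then g ⟨j, h⟩ else 1) = 1
        rw [dif_neg (fun h => h.2 rfl)]
    · rintro ⟨x, hx1, hx2⟩
      ext k
      simp only
      by_cases h : k ≠ i ∧ k ≠ j
      · rw [dif_pos h]
      · rw [dif_neg h]
        push_neg at h
        by_cases hk : k = i
        · rw [hk, hx1]
        · rw [h hk, hx2]
    · intro g; ext k; simp [k.2]
  rw [Fintype.card_congr e, Fintype.card_fun]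
  have hk : Fintype.card {k : Fin n // k ≠ i ∧ k ≠ j} = n - 2 := by
    rw [Fintype.card_subtype]
    have hset : (Finset.univ.filter fun k : Fin n => k ≠ i ∧ k ≠ j)
        = ({i, j} : Finset (Fin n))ᶜ := by
      ext k
      simp [not_or]
    rw [hset, Finset.card_compl, Finset.card_pair hij, Fintype.card_fin]
  rw [hk, ZMod.card 2]

/-- the minimum Hamming distance of `C` equals `2^{n−2}` for `n = m·m'`. -/
theorem stmt_5 (m m' : ℕ) (hm : 2 ≤ m) (hm' : 2 ≤ m') :
    (∀ c ∈ Ccode m m', c ≠ 0 → 2 ^ (m * m' - 2) ≤ wt c) ∧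
    (∃ c ∈ Ccode m m', wt c = 2 ^ (m * m' - 2)) := by
  have h4 : 4 ≤ m * m' := Nat.mul_le_mul hm hm'
  constructor
  · intro c hc hne
    have hCR : Ccode m m' ≤ RMcode 2 (m * m') := by
      rw [Ccode, RMcode]
      apply Submodule.span_mono
      rintro f ⟨S, h1, _, rfl⟩
      exact ⟨S, h1, rfl⟩
    have hb := RM_bound (m * m') 2 c (hCR hc) hne
    have hpow : 2 ^ (m * m') = 2 ^ 2 * 2 ^ (m * m' - 2) := by
      rw [← pow_add]
      congr 1
      omega
    rw [hpow] at hb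
    exact Nat.le_of_mul_le_mul_left hb (by norm_num)
  · have hpos : 0 < m * m' := by omega
    have hj : m' < m * m' := by nlinarith
    set i : Fin (m * m') := ⟨0, hpos⟩ with hi
    set j : Fin (m * m') := ⟨m', hj⟩ with hjdef
    have hij : i ≠ j := by
      apply Fin.ne_of_val_ne
      show 0 ≠ m'
      omega
    refine ⟨mon {i, j}, ?_, count_pair (m * m') i j hij⟩
    apply Submodule.subset_span
    refine ⟨{i, j}, ?_, ?_, rfl⟩
    · rw [Finset.card_pair hij]
    · intro b
      rw [Finset.card_le_one]
      intro a ha c' hc'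
      simp only [Finset.mem_filter, Finset.mem_insert, Finset.mem_singleton] at ha hc'
      have hiv : ((i : ℕ)) / m' = 0 := by
        show 0 / m' = 0
        exact Nat.zero_div m'
      have hjv : ((j : ℕ)) / m' = 1 := by
        show m' / m' = 1
        exact Nat.div_self (by omega)
      rcases ha.1 with rfl | rfl <;> rcases hc'.1 with rfl | rfl
      · rfl
      · exfalso
        have h1 := ha.2; have h2 := hc'.2
        rw [hiv] at h1; rw [hjv] at h2
        omega
      · exfalso
        have h1 := ha.2; have h2 := hc'.2
        rw [hjv] at h1; rw [hiv] at h2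
        omega
      · rfl
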